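/- Conditional version of the IPW identity: under consistency, unconfoundedness, exclusion restriction, and positivity, for almost every x: μ2(x) := E[Z1·Y/E[Z1|Z2,X] | X=x] − E[(1−Z1)·Y/E[1−Z1|Z2,X] | X=x] = τ(x) + Σ_{b∈{0,1}} (h(1,b,x) − h(0,b,x))·P(Z2=b | X=x), where τ(x) = E[Y(1)−Y(0)|X=x] and h(a,b,x) = E[E[Y(a)|X,U] − E[Y(a)|X] | Z1=a, Z2=b, X=x]. -/

import Mathlib

open MeasureTheory ProbabilityTheory

/-- Conditional mean of `f` given the event `A`: `E[f | A]`. -/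
noncomputable def condMeanOn {Ω : Type*} [MeasurableSpace Ω]
    (μ : Measure Ω) (A : Set Ω) (f : Ω → ℝ) : ℝ :=
  (∫ ω in A, f ω ∂μ) / (μ A).toReal

/-- The σ-algebra generated by two real-valued functions, e.g. `σ(X, U)`. -/
def sigma2 {Ω : Type*} (f g : Ω → ℝ) : MeasurableSpace Ω :=
  MeasurableSpace.comap f inferInstance ⊔ MeasurableSpace.comap g inferInstance

/-- The σ-algebra generated by three real-valued functions, e.g. `σ(Z2, X, U)`. -/
def sigma3 {Ω : Type*} (f g h : Ω → ℝ) : MeasurableSpace Ω :=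
  MeasurableSpace.comap f inferInstance ⊔ MeasurableSpace.comap g inferInstance
    ⊔ MeasurableSpace.comap h inferInstance

set_option maxHeartbeats 2000000

lemma eq_on_fiber {Ω γ : Type*} [MeasurableSpace γ] {g : Ω → γ} {f : Ω → ℝ}
    (hf : Measurable[MeasurableSpace.comap g inferInstance] f) {ω ω' : Ω}
    (h : g ω = g ω') : f ω = f ω' := by
  obtain ⟨t, -, ht⟩ := hf (measurableSet_singleton (f ω))
  have hω : ω ∈ g ⁻¹' t := by rw [show g ⁻¹' t = f ⁻¹' {f ω} from ht]; exact rfl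
  have hω' : ω' ∈ g ⁻¹' t := by
    simp only [Set.mem_preimage] at hω ⊢; rwa [← h]
  rw [show g ⁻¹' t = f ⁻¹' {f ω} from ht] at hω'
  exact (Set.mem_singleton_iff.mp hω').symm

section AuxLemmas

variable {Ω : Type*} {m : MeasurableSpace Ω} [mΩ : MeasurableSpace Ω]
  {μ : Measure Ω} [IsProbabilityMeasure μ]

lemma integral_mul_condexp (hm : m ≤ mΩ)
    {g h : Ω → ℝ} (hg : StronglyMeasurable[m] g)
    (hgh : Integrable (fun ω => g ω * h ω) μ) (hh : Integrable h μ) :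
    ∫ ω, g ω * h ω ∂μ = ∫ ω, g ω * (μ[h|m]) ω ∂μ := by
  calc ∫ ω, g ω * h ω ∂μ = ∫ ω, (μ[fun ω => g ω * h ω|m]) ω ∂μ := (integral_condExp hm).symm
    _ = ∫ ω, g ω * (μ[h|m]) ω ∂μ := by
        refine integral_congr_ae ?_
        have := condExp_mul_of_stronglyMeasurable_left hg (by simpa [Pi.mul_def] using hgh) hh
        simpa [Pi.mul_def] using this

lemma indicator_inter_mul (B C : Set Ω) (p : Ω → ℝ) (ω : Ω) :
    (B ∩ C).indicator p ω = B.indicator p ω * C.indicator (fun _ => (1:ℝ)) ω := by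
  by_cases hB : ω ∈ B <;> by_cases hC : ω ∈ C <;>
    simp [Set.indicator_apply, hB, hC, Set.mem_inter_iff]

lemma integral_indicator_mul_eq {B : Set Ω} (hB : MeasurableSet[mΩ] B) (g q : Ω → ℝ) :
    ∫ ω, B.indicator g ω * q ω ∂μ = ∫ ω in B, g ω * q ω ∂μ := by
  rw [← integral_indicator hB]
  congr 1; funext ω; by_cases h : ω ∈ B <;> simp [Set.indicator_apply, h]

lemma norm_indicator_one_le (C : Set Ω) (x : Ω) :
    ‖C.indicator (fun _ => (1:ℝ)) x‖ ≤ 1 := by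
  by_cases h : x ∈ C <;> simp [Set.indicator_apply, h]

lemma setIntegral_inter_eq (hm : m ≤ mΩ)
    {g : Ω → ℝ} (hgm : StronglyMeasurable[m] g) (hg : Integrable g μ)
    {B C : Set Ω} (hC : MeasurableSet[mΩ] C) (hB : MeasurableSet[m] B) :
    ∫ ω in B ∩ C, g ω ∂μ
      = ∫ ω in B, g ω * (μ[C.indicator (fun _ => (1:ℝ)) | m]) ω ∂μ := by
  have hBΩ : MeasurableSet[mΩ] B := hm B hB
  have h1 : ∫ ω in B ∩ C, g ω ∂μ
      = ∫ ω, B.indicator g ω * C.indicator (fun _ => (1:ℝ)) ω ∂μ := by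
    rw [← integral_indicator (hBΩ.inter hC)]
    exact integral_congr_ae (Filter.Eventually.of_forall fun ω => indicator_inter_mul B C g ω)
  have hCint : Integrable (C.indicator (fun _ => (1:ℝ))) μ := (integrable_const (1:ℝ)).indicator hC
  have hprod : Integrable (fun ω => B.indicator g ω * C.indicator (fun _ => (1:ℝ)) ω) μ := by
    have hb := Integrable.bdd_mul (c := 1)
      (f := C.indicator (fun _ => (1:ℝ))) (g := B.indicator g)
      (hg.indicator hBΩ)
      ((stronglyMeasurable_const.indicator hC).aestronglyMeasurable)
      (Filter.Eventually.of_forall (norm_indicator_one_le C))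
    exact hb.congr (Filter.Eventually.of_forall fun ω => mul_comm _ _)
  rw [h1, integral_mul_condexp hm (hgm.indicator hB) hprod hCint,
    integral_indicator_mul_eq hBΩ]

lemma condexp_indicator_sup [StandardBorelSpace Ω] [Nonempty Ω] (hm : m ≤ mΩ)
    {W : Ω → ℝ × ℝ} {Z : Ω → ℝ} (hW : Measurable W) (hZ : Measurable Z)
    (hindep : CondIndepFun m hm W Z μ) (c : ℝ) :
    (μ[(Z ⁻¹' {c}).indicator (fun _ => (1:ℝ)) | m ⊔ MeasurableSpace.comap W inferInstance])
      =ᵐ[μ] (μ[(Z ⁻¹' {c}).indicator (fun _ => (1:ℝ)) | m]) := by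
  have hMΩ : m ⊔ MeasurableSpace.comap W inferInstance ≤ mΩ := sup_le hm hW.comap_le
  have hC : MeasurableSet[mΩ] (Z ⁻¹' {c}) := hZ (measurableSet_singleton c)
  set f : Ω → ℝ := (Z ⁻¹' {c}).indicator (fun _ => (1:ℝ)) with hfdef
  have hfint : Integrable f μ := (integrable_const (1:ℝ)).indicator hC
  set p := μ[f|m] with hpdef
  set P : Set (Set Ω) :=
    {S | ∃ (B : Set Ω) (t : Set (ℝ × ℝ)), MeasurableSet[m] B ∧ MeasurableSet t ∧
      S = B ∩ W ⁻¹' t} with hPdef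
  have h_eq : m ⊔ MeasurableSpace.comap W inferInstance = MeasurableSpace.generateFrom P := by
    apply le_antisymm
    · refine sup_le ?_ ?_
      · intro s hs
        exact MeasurableSpace.measurableSet_generateFrom
          ⟨s, Set.univ, hs, MeasurableSet.univ, by simp⟩
      · intro s hs
        obtain ⟨t, ht, rfl⟩ := hs
        exact MeasurableSpace.measurableSet_generateFrom
          ⟨Set.univ, t, @MeasurableSet.univ Ω m, ht, by simp⟩
    · refine MeasurableSpace.generateFrom_le ?_
      rintro S ⟨B, t, hB, ht, rfl⟩
      exact ((le_sup_left : m ≤ m ⊔ MeasurableSpace.comap W inferInstance) B hB).inter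
        ((le_sup_right :
          MeasurableSpace.comap W inferInstance ≤ m ⊔ MeasurableSpace.comap W inferInstance)
          _ ⟨t, ht, rfl⟩)
  have hPi : IsPiSystem P := by
    rintro S1 ⟨B1, t1, hB1, ht1, rfl⟩ S2 ⟨B2, t2, hB2, ht2, rfl⟩ -
    refine ⟨B1 ∩ B2, t1 ∩ t2, hB1.inter hB2, ht1.inter ht2, ?_⟩
    ext ω; simp only [Set.mem_inter_iff, Set.mem_preimage]; tauto
  have hkey := (condIndepFun_iff_condExp_inter_preimage_eq_mul hW hZ).mp hindep
  have hQ : ∀ S : Set Ω, MeasurableSet[m ⊔ MeasurableSpace.comap W inferInstance] S →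
      ∫ ω in S, p ω ∂μ = ∫ ω in S, f ω ∂μ := by
    refine MeasurableSpace.induction_on_inter (m := m ⊔ MeasurableSpace.comap W inferInstance)
      (C := fun S _ => ∫ ω in S, p ω ∂μ = ∫ ω in S, f ω ∂μ) (s := P) h_eq hPi (by simp) ?_ ?_ ?_
    · rintro S ⟨B, t, hB, ht, rfl⟩
      have hWt : MeasurableSet[mΩ] (W ⁻¹' t) := hW ht
      have hBΩ : MeasurableSet[mΩ] B := hm B hB
      have hk := hkey t {c} ht (measurableSet_singleton c)
      calc ∫ ω in B ∩ W ⁻¹' t, p ω ∂μ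
          = ∫ ω in B, p ω * (μ[(W ⁻¹' t).indicator (fun _ => (1:ℝ))|m]) ω ∂μ :=
            setIntegral_inter_eq hm stronglyMeasurable_condExp integrable_condExp hWt hB
        _ = ∫ ω in B, (μ[(W ⁻¹' t ∩ Z ⁻¹' {c}).indicator (fun _ => (1:ℝ))|m]) ω ∂μ := by
            refine setIntegral_congr_ae hBΩ ?_
            filter_upwards [hk] with ω hω _
            rw [mul_comm]; exact hω.symm
        _ = ∫ ω in B, (W ⁻¹' t ∩ Z ⁻¹' {c}).indicator (fun _ => (1:ℝ)) ω ∂μ :=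
            setIntegral_condExp hm ((integrable_const (1:ℝ)).indicator (hWt.inter hC)) hB
        _ = ∫ ω in B ∩ (W ⁻¹' t ∩ Z ⁻¹' {c}), (1:ℝ) ∂μ := setIntegral_indicator (hWt.inter hC)
        _ = ∫ ω in (B ∩ W ⁻¹' t) ∩ Z ⁻¹' {c}, (1:ℝ) ∂μ := by rw [Set.inter_assoc]
        _ = ∫ ω in B ∩ W ⁻¹' t, f ω ∂μ := (setIntegral_indicator hC).symm
    · intro S hS hQS
      have hSΩ : MeasurableSet[mΩ] S := hMΩ S hS
      have h1 := integral_add_compl hSΩ (integrable_condExp (f := f) (m := m) (μ := μ))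
      have h2 := integral_add_compl hSΩ hfint
      have h3 : ∫ ω, p ω ∂μ = ∫ ω, f ω ∂μ := integral_condExp hm
      linarith
    · intro g hd hgm hQg
      rw [integral_iUnion (fun i => hMΩ _ (hgm i)) hd integrable_condExp.integrableOn,
        integral_iUnion (fun i => hMΩ _ (hgm i)) hd hfint.integrableOn]
      exact tsum_congr hQg
  exact (ae_eq_condExp_of_forall_setIntegral_eq hMΩ hfint
    (fun S _ _ => integrable_condExp.integrableOn)
    (fun S hS _ => hQ S hS)
    ((stronglyMeasurable_condExp.mono
      (le_sup_left : m ≤ m ⊔ MeasurableSpace.comap W inferInstance)).aestronglyMeasurable)).symm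

lemma key_setIntegral [StandardBorelSpace Ω] [Nonempty Ω] (hm : m ≤ mΩ)
    {W : Ω → ℝ × ℝ} {Z : Ω → ℝ} (hW : Measurable W) (hZ : Measurable Z)
    (hindep : CondIndepFun m hm W Z μ) {f : Ω → ℝ} (hf : Integrable f μ)
    (hfW : StronglyMeasurable[MeasurableSpace.comap W inferInstance] f)
    {B : Set Ω} (hB : MeasurableSet[m] B) (c : ℝ) :
    ∫ ω in B ∩ Z ⁻¹' {c}, f ω ∂μ
      = ∫ ω in B, (μ[f|m]) ω * (μ[(Z ⁻¹' {c}).indicator (fun _ => (1:ℝ))|m]) ω ∂μ := by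
  have hmM : m ≤ m ⊔ MeasurableSpace.comap W inferInstance := le_sup_left
  have hMΩ : m ⊔ MeasurableSpace.comap W inferInstance ≤ mΩ := sup_le hm hW.comap_le
  have hC : MeasurableSet[mΩ] (Z ⁻¹' {c}) := hZ (measurableSet_singleton c)
  have hBΩ : MeasurableSet[mΩ] B := hm B hB
  have hfM : StronglyMeasurable[m ⊔ MeasurableSpace.comap W inferInstance] f :=
    hfW.mono le_sup_right
  have h1 := setIntegral_inter_eq hMΩ hfM hf hC (hmM B hB)
  have h2 := condexp_indicator_sup hm hW hZ hindep c
  have h3 : ∫ ω in B, f ω * (μ[(Z ⁻¹' {c}).indicator (fun _ => (1:ℝ))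
        | m ⊔ MeasurableSpace.comap W inferInstance]) ω ∂μ
      = ∫ ω in B, f ω * (μ[(Z ⁻¹' {c}).indicator (fun _ => (1:ℝ))|m]) ω ∂μ := by
    refine setIntegral_congr_ae hBΩ ?_
    filter_upwards [h2] with ω hω _
    rw [hω]
  have hp0 : 0 ≤ᵐ[μ] (μ[(Z ⁻¹' {c}).indicator (fun _ => (1:ℝ))|m]) :=
    condExp_nonneg (Filter.Eventually.of_forall fun ω =>
      Set.indicator_nonneg (fun _ _ => zero_le_one) ω)
  have hp1 : (μ[(Z ⁻¹' {c}).indicator (fun _ => (1:ℝ))|m]) ≤ᵐ[μ] fun _ => (1:ℝ) := by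
    have hmono := condExp_mono (μ := μ) (m := m)
      ((integrable_const (1:ℝ)).indicator hC) (integrable_const (1:ℝ))
      (Filter.Eventually.of_forall fun ω => Set.indicator_le_self' (fun _ _ => zero_le_one) ω)
    rwa [condExp_const hm] at hmono
  have hpbound : ∀ᵐ ω ∂μ, ‖B.indicator (μ[(Z ⁻¹' {c}).indicator (fun _ => (1:ℝ))|m]) ω‖ ≤ 1 := by
    filter_upwards [hp0, hp1] with ω h0 h1'
    by_cases h : ω ∈ B
    · simp only [Set.indicator_of_mem h, Real.norm_eq_abs, abs_le]
      refine ⟨by simpa using (le_trans (by norm_num) (h0 : (0:ℝ) ≤ _)), h1'⟩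
    · simp [Set.indicator_of_notMem h]
  have hint1 : Integrable (fun ω =>
      B.indicator (μ[(Z ⁻¹' {c}).indicator (fun _ => (1:ℝ))|m]) ω * f ω) μ :=
    Integrable.bdd_mul (c := 1) hf
      (((stronglyMeasurable_condExp.mono hm).indicator hBΩ).aestronglyMeasurable) hpbound
  have h4 : ∫ ω in B, f ω * (μ[(Z ⁻¹' {c}).indicator (fun _ => (1:ℝ))|m]) ω ∂μ
      = ∫ ω in B, (μ[f|m]) ω * (μ[(Z ⁻¹' {c}).indicator (fun _ => (1:ℝ))|m]) ω ∂μ := by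
    have e0 : ∫ ω in B, f ω * (μ[(Z ⁻¹' {c}).indicator (fun _ => (1:ℝ))|m]) ω ∂μ
        = ∫ ω, B.indicator (μ[(Z ⁻¹' {c}).indicator (fun _ => (1:ℝ))|m]) ω * f ω ∂μ := by
      rw [integral_indicator_mul_eq hBΩ (μ[(Z ⁻¹' {c}).indicator (fun _ => (1:ℝ))|m]) f]
      exact integral_congr_ae (Filter.Eventually.of_forall fun ω => mul_comm _ _)
    have e1 := integral_mul_condexp hm
      (stronglyMeasurable_condExp.indicator hB) hint1 hf
    have e2 : ∫ ω, B.indicator (μ[(Z ⁻¹' {c}).indicator (fun _ => (1:ℝ))|m]) ω * (μ[f|m]) ω ∂μ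
        = ∫ ω in B, (μ[f|m]) ω * (μ[(Z ⁻¹' {c}).indicator (fun _ => (1:ℝ))|m]) ω ∂μ := by
      rw [integral_indicator_mul_eq hBΩ]
      exact integral_congr_ae (Filter.Eventually.of_forall fun ω => mul_comm _ _)
    rw [e0, e1, e2]
  rw [h1, h3, h4]

end AuxLemmas

/-- conditional IPW identity: under consistency, unconfoundedness, exclusion
restriction and positivity, for a fixed `x` with all conditional cells positive,
`μ2(x) := E[Z1·Y/E[Z1|Z2,X] | X=x] − E[(1−Z1)·Y/E[1−Z1|Z2,X] | X=x]
       = τ(x) + Σ_{b∈{0,1}} (h(1,b,x) − h(0,b,x))·P(Z2=b|X=x)`,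
where `τ(x) = E[Y(1)−Y(0)|X=x]` and
`h(a,b,x) = E[E[Y(a)|X,U] − E[Y(a)|X] | Z1=a, Z2=b, X=x]`. -/
theorem ipw_conditional_identity
    {Ω : Type*} [mΩ : MeasurableSpace Ω] [StandardBorelSpace Ω] [Nonempty Ω]
    (μ : Measure Ω) [IsProbabilityMeasure μ]
    (Z1 Z2 X U Y1 Y0 Y : Ω → ℝ) (x : ℝ)
    (hZ1 : Measurable Z1) (hZ2 : Measurable Z2) (hX : Measurable X) (hU : Measurable U)
    (hY1m : Measurable Y1) (hY0m : Measurable Y0)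
    (hZ1bin : ∀ ω, Z1 ω = 0 ∨ Z1 ω = 1) (hZ2bin : ∀ ω, Z2 ω = 0 ∨ Z2 ω = 1)
    (hY1int : Integrable Y1 μ) (hY0int : Integrable Y0 μ)
    -- consistency
    (hcons : ∀ ω, Y ω = Z1 ω * Y1 ω + (1 - Z1 ω) * Y0 ω)
    (hle : sigma3 Z2 X U ≤ mΩ)
    -- unconfoundedness: {Y(1), Y(0)} ⫫ Z1 | X, Z2, U
    (hunconf : CondIndepFun (sigma3 Z2 X U) hle (fun ω => (Y1 ω, Y0 ω)) Z1 μ)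
    -- exclusion restriction for both potential outcomes
    (hexcl1 : μ[Y1 | sigma3 Z2 X U] =ᵐ[μ] μ[Y1 | sigma2 X U])
    (hexcl0 : μ[Y0 | sigma3 Z2 X U] =ᵐ[μ] μ[Y0 | sigma2 X U])
    -- positivity: 0 < E[Z1|Z2,X] < 1 a.s.
    (hpos : ∀ᵐ ω ∂μ, 0 < (μ[Z1 | sigma2 Z2 X]) ω ∧ (μ[Z1 | sigma2 Z2 X]) ω < 1)
    -- positive conditional probabilities at X = x
    (hx : 0 < μ {ω | X ω = x})
    (hcells : ∀ a b : ℝ, (a = 0 ∨ a = 1) → (b = 0 ∨ b = 1) →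
      0 < μ {ω | Z1 ω = a ∧ Z2 ω = b ∧ X ω = x}) :
    condMeanOn μ {ω | X ω = x}
        (fun ω => Z1 ω * Y ω / (μ[Z1 | sigma2 Z2 X]) ω
          - (1 - Z1 ω) * Y ω / (1 - (μ[Z1 | sigma2 Z2 X]) ω))
      = condMeanOn μ {ω | X ω = x} (fun ω => Y1 ω - Y0 ω)
        + ((condMeanOn μ {ω | Z1 ω = 1 ∧ Z2 ω = 0 ∧ X ω = x}
              (fun ω => (μ[Y1 | sigma2 X U]) ω
                - (μ[Y1 | MeasurableSpace.comap X inferInstance]) ω)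
            - condMeanOn μ {ω | Z1 ω = 0 ∧ Z2 ω = 0 ∧ X ω = x}
              (fun ω => (μ[Y0 | sigma2 X U]) ω
                - (μ[Y0 | MeasurableSpace.comap X inferInstance]) ω))
            * ((μ {ω | Z2 ω = 0 ∧ X ω = x}).toReal / (μ {ω | X ω = x}).toReal)
          + (condMeanOn μ {ω | Z1 ω = 1 ∧ Z2 ω = 1 ∧ X ω = x}
              (fun ω => (μ[Y1 | sigma2 X U]) ω
                - (μ[Y1 | MeasurableSpace.comap X inferInstance]) ω)
            - condMeanOn μ {ω | Z1 ω = 0 ∧ Z2 ω = 1 ∧ X ω = x}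
              (fun ω => (μ[Y0 | sigma2 X U]) ω
                - (μ[Y0 | MeasurableSpace.comap X inferInstance]) ω))
            * ((μ {ω | Z2 ω = 1 ∧ X ω = x}).toReal / (μ {ω | X ω = x}).toReal)) := by
  -- abbreviations
  set e := μ[Z1 | sigma2 Z2 X] with he
  set m1 := μ[Y1 | sigma2 X U] with hm1
  set m0 := μ[Y0 | sigma2 X U] with hm0
  set r1 := μ[Y1 | MeasurableSpace.comap X inferInstance] with hr1
  set r0 := μ[Y0 | MeasurableSpace.comap X inferInstance] with hr0
  set F := fun ω => Z1 ω * Y ω / e ω - (1 - Z1 ω) * Y ω / (1 - e ω) with hF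
  -- sigma-algebra inequalities
  have hm2 : sigma2 Z2 X ≤ mΩ := sup_le hZ2.comap_le hX.comap_le
  have hmX : MeasurableSpace.comap X inferInstance ≤ mΩ := hX.comap_le
  have hm23 : sigma2 Z2 X ≤ sigma3 Z2 X U := le_sup_left
  have hm2XU3 : sigma2 X U ≤ sigma3 Z2 X U :=
    sup_le (le_sup_of_le_left le_sup_right) le_sup_right
  -- measurability of e w.r.t. the pair (Z2, X)
  have hpairle : sigma2 Z2 X
      ≤ MeasurableSpace.comap (fun ω => (Z2 ω, X ω)) inferInstance := by
    refine sup_le ?_ ?_ <;> rintro s ⟨t, ht, rfl⟩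
    · exact ⟨Prod.fst ⁻¹' t, measurable_fst ht, rfl⟩
    · exact ⟨Prod.snd ⁻¹' t, measurable_snd ht, rfl⟩
  have hemeas : Measurable[MeasurableSpace.comap (fun ω => (Z2 ω, X ω)) inferInstance] e :=
    (stronglyMeasurable_condExp.measurable).mono hpairle le_rfl
  have hr1meas : Measurable[MeasurableSpace.comap X inferInstance] r1 :=
    stronglyMeasurable_condExp.measurable
  have hr0meas : Measurable[MeasurableSpace.comap X inferInstance] r0 :=
    stronglyMeasurable_condExp.measurable
  -- integrability of Z1
  have hZ1int : Integrable Z1 μ := by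
    refine Integrable.mono' (integrable_const (1:ℝ)) hZ1.aestronglyMeasurable
      (Filter.Eventually.of_forall fun ω => ?_)
    rcases hZ1bin ω with h | h <;> simp [h]
  -- W and its measurability
  have hWmeas : Measurable (fun ω => (Y1 ω, Y0 ω)) := hY1m.prodMk hY0m
  have hWid : Measurable[MeasurableSpace.comap (fun ω => (Y1 ω, Y0 ω)) inferInstance]
      (fun ω => (Y1 ω, Y0 ω)) := measurable_iff_comap_le.mpr le_rfl
  have hfW1 : StronglyMeasurable[MeasurableSpace.comap (fun ω => (Y1 ω, Y0 ω)) inferInstance]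
      Y1 := (measurable_fst.comp hWid).stronglyMeasurable
  have hfW0 : StronglyMeasurable[MeasurableSpace.comap (fun ω => (Y1 ω, Y0 ω)) inferInstance]
      Y0 := (measurable_snd.comp hWid).stronglyMeasurable
  have hm1meas3 : StronglyMeasurable[sigma3 Z2 X U] m1 := stronglyMeasurable_condExp.mono hm2XU3
  have hm0meas3 : StronglyMeasurable[sigma3 Z2 X U] m0 := stronglyMeasurable_condExp.mono hm2XU3
  have hC1 : MeasurableSet[mΩ] (Z1 ⁻¹' {(1:ℝ)}) := hZ1 (measurableSet_singleton 1)
  have hC0 : MeasurableSet[mΩ] (Z1 ⁻¹' {(0:ℝ)}) := hZ1 (measurableSet_singleton 0)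
  -- reference point in {X = x}
  obtain ⟨ωx, hωx⟩ := nonempty_of_measure_ne_zero hx.ne'
  have hXωx : X ωx = x := hωx
  set c1 := r1 ωx with hc1
  set c0 := r0 ωx with hc0
  have hr1c : ∀ ω, X ω = x → r1 ω = c1 :=
    fun ω hω => eq_on_fiber hr1meas (by rw [hω, hXωx])
  have hr0c : ∀ ω, X ω = x → r0 ω = c0 :=
    fun ω hω => eq_on_fiber hr0meas (by rw [hω, hXωx])
  -- bad set for positivity
  have hbad : μ {ω | ¬ (0 < e ω ∧ e ω < 1)} = 0 := by
    simpa [ae_iff] using hpos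
  -- basic measure facts
  have hSxΩ : MeasurableSet {ω | X ω = x} := hX (measurableSet_singleton x)
  have hSxint1 : ∫ ω in {ω | X ω = x}, Y1 ω ∂μ = c1 * (μ {ω | X ω = x}).toReal := by
    have hSxX : MeasurableSet[MeasurableSpace.comap X inferInstance] {ω | X ω = x} :=
      ⟨{x}, measurableSet_singleton x, rfl⟩
    rw [← setIntegral_condExp hmX hY1int hSxX, ← hr1]
    rw [setIntegral_congr_fun hSxΩ (fun ω hω => hr1c ω hω)]
    rw [setIntegral_const, smul_eq_mul, mul_comm, measureReal_def]
  have hSxint0 : ∫ ω in {ω | X ω = x}, Y0 ω ∂μ = c0 * (μ {ω | X ω = x}).toReal := by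
    have hSxX : MeasurableSet[MeasurableSpace.comap X inferInstance] {ω | X ω = x} :=
      ⟨{x}, measurableSet_singleton x, rfl⟩
    rw [← setIntegral_condExp hmX hY0int hSxX, ← hr0]
    rw [setIntegral_congr_fun hSxΩ (fun ω hω => hr0c ω hω)]
    rw [setIntegral_const, smul_eq_mul, mul_comm, measureReal_def]
  -- THE PER-CELL CLAIM
  have claim : ∀ b : ℝ, b = 0 ∨ b = 1 →
      IntegrableOn F {ω | Z2 ω = b ∧ X ω = x} μ ∧
      ∫ ω in {ω | Z2 ω = b ∧ X ω = x}, F ω ∂μ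
        = (condMeanOn μ {ω | Z1 ω = 1 ∧ Z2 ω = b ∧ X ω = x} (fun ω => m1 ω - r1 ω)
            - condMeanOn μ {ω | Z1 ω = 0 ∧ Z2 ω = b ∧ X ω = x} (fun ω => m0 ω - r0 ω)
            + (c1 - c0)) * (μ {ω | Z2 ω = b ∧ X ω = x}).toReal := by
    intro b hb
    -- sets
    have hA1Ω : MeasurableSet {ω | Z1 ω = 1 ∧ Z2 ω = b ∧ X ω = x} :=
      (hZ1 (measurableSet_singleton 1)).inter
        ((hZ2 (measurableSet_singleton b)).inter (hX (measurableSet_singleton x)))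
    have hA0Ω : MeasurableSet {ω | Z1 ω = 0 ∧ Z2 ω = b ∧ X ω = x} :=
      (hZ1 (measurableSet_singleton 0)).inter
        ((hZ2 (measurableSet_singleton b)).inter (hX (measurableSet_singleton x)))
    have hBbm2 : MeasurableSet[sigma2 Z2 X] {ω | Z2 ω = b ∧ X ω = x} := by
      have h1 : MeasurableSet[sigma2 Z2 X] (Z2 ⁻¹' {b}) :=
        (le_sup_left : MeasurableSpace.comap Z2 inferInstance ≤ sigma2 Z2 X)
          _ ⟨{b}, measurableSet_singleton b, rfl⟩
      have h2 : MeasurableSet[sigma2 Z2 X] (X ⁻¹' {x}) :=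
        (le_sup_right : MeasurableSpace.comap X inferInstance ≤ sigma2 Z2 X)
          _ ⟨{x}, measurableSet_singleton x, rfl⟩
      exact h1.inter h2
    have hBbm3 : MeasurableSet[sigma3 Z2 X U] {ω | Z2 ω = b ∧ X ω = x} := hm23 _ hBbm2
    have hBbΩ : MeasurableSet {ω | Z2 ω = b ∧ X ω = x} := hm2 _ hBbm2
    have hA1eq : {ω | Z1 ω = 1 ∧ Z2 ω = b ∧ X ω = x}
        = {ω | Z2 ω = b ∧ X ω = x} ∩ Z1 ⁻¹' {(1:ℝ)} := by
      ext ω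
      simp only [Set.mem_setOf_eq, Set.mem_inter_iff, Set.mem_preimage,
        Set.mem_singleton_iff]
      tauto
    have hA0eq : {ω | Z1 ω = 0 ∧ Z2 ω = b ∧ X ω = x}
        = {ω | Z2 ω = b ∧ X ω = x} ∩ Z1 ⁻¹' {(0:ℝ)} := by
      ext ω
      simp only [Set.mem_setOf_eq, Set.mem_inter_iff, Set.mem_preimage,
        Set.mem_singleton_iff]
      tauto
    have hBbsplit : {ω | Z2 ω = b ∧ X ω = x}
        = {ω | Z1 ω = 1 ∧ Z2 ω = b ∧ X ω = x} ∪ {ω | Z1 ω = 0 ∧ Z2 ω = b ∧ X ω = x} := by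
      ext ω
      simp only [Set.mem_setOf_eq, Set.mem_union]
      constructor
      · intro hω
        rcases hZ1bin ω with h | h
        · exact Or.inr ⟨h, hω⟩
        · exact Or.inl ⟨h, hω⟩
      · rintro (⟨-, hω⟩ | ⟨-, hω⟩) <;> exact hω
    have hdisj : Disjoint {ω | Z1 ω = 1 ∧ Z2 ω = b ∧ X ω = x}
        {ω | Z1 ω = 0 ∧ Z2 ω = b ∧ X ω = x} := by
      rw [Set.disjoint_left]
      rintro ω ⟨h1, -⟩ ⟨h0, -⟩
      rw [h1] at h0
      norm_num at h0
    -- the constant pb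
    have hA1pos : 0 < μ {ω | Z1 ω = 1 ∧ Z2 ω = b ∧ X ω = x} := hcells 1 b (Or.inr rfl) hb
    have hA0pos : 0 < μ {ω | Z1 ω = 0 ∧ Z2 ω = b ∧ X ω = x} := hcells 0 b (Or.inl rfl) hb
    have hne : μ ({ω | Z1 ω = 1 ∧ Z2 ω = b ∧ X ω = x} ∩ {ω | 0 < e ω ∧ e ω < 1}) ≠ 0 := by
      intro h0
      have hsub : μ {ω | Z1 ω = 1 ∧ Z2 ω = b ∧ X ω = x}
          ≤ μ ({ω | Z1 ω = 1 ∧ Z2 ω = b ∧ X ω = x} ∩ {ω | 0 < e ω ∧ e ω < 1})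
            + μ {ω | ¬ (0 < e ω ∧ e ω < 1)} := by
        refine (measure_mono ?_).trans (measure_union_le _ _)
        intro ω hω
        by_cases hg : 0 < e ω ∧ e ω < 1
        · exact Or.inl ⟨hω, hg⟩
        · exact Or.inr hg
      rw [h0, hbad] at hsub
      simp only [add_zero, nonpos_iff_eq_zero] at hsub
      exact hA1pos.ne' hsub
    obtain ⟨ωb, hωbA1, hωbg⟩ := nonempty_of_measure_ne_zero hne
    have hZ1ωb : Z1 ωb = 1 := hωbA1.1
    have hZ2ωb : Z2 ωb = b := hωbA1.2.1
    have hXωb : X ωb = x := hωbA1.2.2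
    have hp0 : 0 < e ωb := hωbg.1
    have hp1 : e ωb < 1 := hωbg.2
    have hpne : e ωb ≠ 0 := hp0.ne'
    have hpne1 : (1:ℝ) - e ωb ≠ 0 := by linarith
    have hconst : ∀ ω, Z2 ω = b → X ω = x → e ω = e ωb := by
      intro ω h1 h2
      exact eq_on_fiber hemeas (by rw [h1, h2, hZ2ωb, hXωb])
    -- measure identities
    have hintZ1 : ∫ ω in {ω | Z2 ω = b ∧ X ω = x}, Z1 ω ∂μ
        = (μ {ω | Z1 ω = 1 ∧ Z2 ω = b ∧ X ω = x}).toReal := by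
      rw [hBbsplit, setIntegral_union hdisj hA0Ω hZ1int.integrableOn hZ1int.integrableOn]
      rw [setIntegral_congr_fun hA1Ω (fun ω hω => hω.1),
        setIntegral_congr_fun hA0Ω (fun ω (hω : Z1 ω = 0 ∧ _) => hω.1)]
      simp [setIntegral_const, measureReal_def]
    have hintE : ∫ ω in {ω | Z2 ω = b ∧ X ω = x}, e ω ∂μ
        = e ωb * (μ {ω | Z2 ω = b ∧ X ω = x}).toReal := by
      rw [setIntegral_congr_fun hBbΩ
        (fun ω (hω : Z2 ω = b ∧ X ω = x) => hconst ω hω.1 hω.2)]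
      rw [setIntegral_const, smul_eq_mul, mul_comm, measureReal_def]
    have hEZ : ∫ ω in {ω | Z2 ω = b ∧ X ω = x}, e ω ∂μ
        = ∫ ω in {ω | Z2 ω = b ∧ X ω = x}, Z1 ω ∂μ :=
      setIntegral_condExp hm2 hZ1int hBbm2
    have hMA1 : (μ {ω | Z1 ω = 1 ∧ Z2 ω = b ∧ X ω = x}).toReal
        = e ωb * (μ {ω | Z2 ω = b ∧ X ω = x}).toReal := by
      rw [← hintZ1, ← hEZ, hintE]
    have hMBsum : (μ {ω | Z2 ω = b ∧ X ω = x}).toReal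
        = (μ {ω | Z1 ω = 1 ∧ Z2 ω = b ∧ X ω = x}).toReal
          + (μ {ω | Z1 ω = 0 ∧ Z2 ω = b ∧ X ω = x}).toReal := by
      rw [hBbsplit, measure_union hdisj hA0Ω,
        ENNReal.toReal_add (measure_ne_top μ _) (measure_ne_top μ _)]
    have hMA0 : (μ {ω | Z1 ω = 0 ∧ Z2 ω = b ∧ X ω = x}).toReal
        = (1 - e ωb) * (μ {ω | Z2 ω = b ∧ X ω = x}).toReal := by
      rw [sub_mul, one_mul, ← hMA1]
      linarith [hMBsum]
    -- step: ∫_{A1} Y1 = ∫_{A1} m1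
    have hI1 : ∫ ω in {ω | Z1 ω = 1 ∧ Z2 ω = b ∧ X ω = x}, Y1 ω ∂μ
        = ∫ ω in {ω | Z1 ω = 1 ∧ Z2 ω = b ∧ X ω = x}, m1 ω ∂μ := by
      rw [hA1eq, key_setIntegral hle hWmeas hZ1 hunconf hY1int hfW1 hBbm3 1,
        setIntegral_inter_eq hle hm1meas3 integrable_condExp hC1 hBbm3]
      refine setIntegral_congr_ae hBbΩ ?_
      filter_upwards [hexcl1] with ω hω _
      rw [hω]
    have hI0 : ∫ ω in {ω | Z1 ω = 0 ∧ Z2 ω = b ∧ X ω = x}, Y0 ω ∂μ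
        = ∫ ω in {ω | Z1 ω = 0 ∧ Z2 ω = b ∧ X ω = x}, m0 ω ∂μ := by
      rw [hA0eq, key_setIntegral hle hWmeas hZ1 hunconf hY0int hfW0 hBbm3 0,
        setIntegral_inter_eq hle hm0meas3 integrable_condExp hC0 hBbm3]
      refine setIntegral_congr_ae hBbΩ ?_
      filter_upwards [hexcl0] with ω hω _
      rw [hω]
    -- decompose ∫ m1 over A1
    have hMA1ne : (μ {ω | Z1 ω = 1 ∧ Z2 ω = b ∧ X ω = x}).toReal ≠ 0 :=
      (ENNReal.toReal_pos hA1pos.ne' (measure_ne_top μ _)).ne'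
    have hMA0ne : (μ {ω | Z1 ω = 0 ∧ Z2 ω = b ∧ X ω = x}).toReal ≠ 0 :=
      (ENNReal.toReal_pos hA0pos.ne' (measure_ne_top μ _)).ne'
    have hIm1 : ∫ ω in {ω | Z1 ω = 1 ∧ Z2 ω = b ∧ X ω = x}, m1 ω ∂μ
        = (condMeanOn μ {ω | Z1 ω = 1 ∧ Z2 ω = b ∧ X ω = x} (fun ω => m1 ω - r1 ω) + c1)
          * (μ {ω | Z1 ω = 1 ∧ Z2 ω = b ∧ X ω = x}).toReal := by
      have hsub : ∫ ω in {ω | Z1 ω = 1 ∧ Z2 ω = b ∧ X ω = x}, (m1 ω - r1 ω) ∂μ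
          = (∫ ω in {ω | Z1 ω = 1 ∧ Z2 ω = b ∧ X ω = x}, m1 ω ∂μ)
            - ∫ ω in {ω | Z1 ω = 1 ∧ Z2 ω = b ∧ X ω = x}, r1 ω ∂μ :=
        integral_sub integrable_condExp.integrableOn integrable_condExp.integrableOn
      have hrconst : ∫ ω in {ω | Z1 ω = 1 ∧ Z2 ω = b ∧ X ω = x}, r1 ω ∂μ
          = c1 * (μ {ω | Z1 ω = 1 ∧ Z2 ω = b ∧ X ω = x}).toReal := by
        rw [setIntegral_congr_fun hA1Ω
          (fun ω (hω : Z1 ω = 1 ∧ Z2 ω = b ∧ X ω = x) => hr1c ω hω.2.2)]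
        rw [setIntegral_const, smul_eq_mul, mul_comm, measureReal_def]
      have hcm : condMeanOn μ {ω | Z1 ω = 1 ∧ Z2 ω = b ∧ X ω = x} (fun ω => m1 ω - r1 ω)
          * (μ {ω | Z1 ω = 1 ∧ Z2 ω = b ∧ X ω = x}).toReal
          = ∫ ω in {ω | Z1 ω = 1 ∧ Z2 ω = b ∧ X ω = x}, (m1 ω - r1 ω) ∂μ :=
        div_mul_cancel₀ _ hMA1ne
      rw [add_mul, hcm, hsub, hrconst]
      ring
    have hIm0 : ∫ ω in {ω | Z1 ω = 0 ∧ Z2 ω = b ∧ X ω = x}, m0 ω ∂μ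
        = (condMeanOn μ {ω | Z1 ω = 0 ∧ Z2 ω = b ∧ X ω = x} (fun ω => m0 ω - r0 ω) + c0)
          * (μ {ω | Z1 ω = 0 ∧ Z2 ω = b ∧ X ω = x}).toReal := by
      have hsub : ∫ ω in {ω | Z1 ω = 0 ∧ Z2 ω = b ∧ X ω = x}, (m0 ω - r0 ω) ∂μ
          = (∫ ω in {ω | Z1 ω = 0 ∧ Z2 ω = b ∧ X ω = x}, m0 ω ∂μ)
            - ∫ ω in {ω | Z1 ω = 0 ∧ Z2 ω = b ∧ X ω = x}, r0 ω ∂μ :=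
        integral_sub integrable_condExp.integrableOn integrable_condExp.integrableOn
      have hrconst : ∫ ω in {ω | Z1 ω = 0 ∧ Z2 ω = b ∧ X ω = x}, r0 ω ∂μ
          = c0 * (μ {ω | Z1 ω = 0 ∧ Z2 ω = b ∧ X ω = x}).toReal := by
        rw [setIntegral_congr_fun hA0Ω
          (fun ω (hω : Z1 ω = 0 ∧ Z2 ω = b ∧ X ω = x) => hr0c ω hω.2.2)]
        rw [setIntegral_const, smul_eq_mul, mul_comm, measureReal_def]
      have hcm : condMeanOn μ {ω | Z1 ω = 0 ∧ Z2 ω = b ∧ X ω = x} (fun ω => m0 ω - r0 ω)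
          * (μ {ω | Z1 ω = 0 ∧ Z2 ω = b ∧ X ω = x}).toReal
          = ∫ ω in {ω | Z1 ω = 0 ∧ Z2 ω = b ∧ X ω = x}, (m0 ω - r0 ω) ∂μ :=
        div_mul_cancel₀ _ hMA0ne
      rw [add_mul, hcm, hsub, hrconst]
      ring
    -- F on the cells
    have hFA1 : Set.EqOn (fun ω => Y1 ω / e ωb) F {ω | Z1 ω = 1 ∧ Z2 ω = b ∧ X ω = x} := by
      rintro ω ⟨h1, h2, h3⟩
      have hY : Y ω = Y1 ω := by rw [hcons ω, h1]; ring
      simp only [hF]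
      rw [h1, hY, hconst ω h2 h3]
      ring
    have hFA0 : Set.EqOn (fun ω => -(Y0 ω / (1 - e ωb))) F
        {ω | Z1 ω = 0 ∧ Z2 ω = b ∧ X ω = x} := by
      rintro ω ⟨h1, h2, h3⟩
      have hY : Y ω = Y0 ω := by rw [hcons ω, h1]; ring
      simp only [hF]
      rw [h1, hY, hconst ω h2 h3]
      ring
    have hIntF1 : IntegrableOn F {ω | Z1 ω = 1 ∧ Z2 ω = b ∧ X ω = x} μ :=
      ((hY1int.div_const (e ωb)).integrableOn).congr_fun hFA1 hA1Ω
    have hIntF0 : IntegrableOn F {ω | Z1 ω = 0 ∧ Z2 ω = b ∧ X ω = x} μ :=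
      (((hY0int.div_const (1 - e ωb)).neg).integrableOn).congr_fun hFA0 hA0Ω
    have hIntFB : IntegrableOn F {ω | Z2 ω = b ∧ X ω = x} μ := by
      rw [hBbsplit]; exact hIntF1.union hIntF0
    refine ⟨hIntFB, ?_⟩
    have hFint1 : ∫ ω in {ω | Z1 ω = 1 ∧ Z2 ω = b ∧ X ω = x}, F ω ∂μ
        = (∫ ω in {ω | Z1 ω = 1 ∧ Z2 ω = b ∧ X ω = x}, Y1 ω ∂μ) / e ωb := by
      rw [← setIntegral_congr_fun hA1Ω hFA1, integral_div]
    have hFint0 : ∫ ω in {ω | Z1 ω = 0 ∧ Z2 ω = b ∧ X ω = x}, F ω ∂μ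
        = -((∫ ω in {ω | Z1 ω = 0 ∧ Z2 ω = b ∧ X ω = x}, Y0 ω ∂μ) / (1 - e ωb)) := by
      rw [← setIntegral_congr_fun hA0Ω hFA0, integral_neg, integral_div]
    calc ∫ ω in {ω | Z2 ω = b ∧ X ω = x}, F ω ∂μ
        = (∫ ω in {ω | Z1 ω = 1 ∧ Z2 ω = b ∧ X ω = x}, F ω ∂μ)
          + ∫ ω in {ω | Z1 ω = 0 ∧ Z2 ω = b ∧ X ω = x}, F ω ∂μ := by
          rw [hBbsplit]; exact setIntegral_union hdisj hA0Ω hIntF1 hIntF0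
      _ = (condMeanOn μ {ω | Z1 ω = 1 ∧ Z2 ω = b ∧ X ω = x} (fun ω => m1 ω - r1 ω)
            - condMeanOn μ {ω | Z1 ω = 0 ∧ Z2 ω = b ∧ X ω = x} (fun ω => m0 ω - r0 ω)
            + (c1 - c0)) * (μ {ω | Z2 ω = b ∧ X ω = x}).toReal := by
          rw [hFint1, hFint0, hI1, hI0, hIm1, hIm0, hMA1, hMA0]
          field_simp
          ring
  -- split {X = x} into the two Z2-cells
  have hB0Ω : MeasurableSet {ω | Z2 ω = 0 ∧ X ω = x} :=
    (hZ2 (measurableSet_singleton 0)).inter (hX (measurableSet_singleton x))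
  have hB1Ω : MeasurableSet {ω | Z2 ω = 1 ∧ X ω = x} :=
    (hZ2 (measurableSet_singleton 1)).inter (hX (measurableSet_singleton x))
  have hSxsplit : {ω | X ω = x}
      = {ω | Z2 ω = 0 ∧ X ω = x} ∪ {ω | Z2 ω = 1 ∧ X ω = x} := by
    ext ω
    simp only [Set.mem_setOf_eq, Set.mem_union]
    constructor
    · intro hω
      rcases hZ2bin ω with h | h
      · exact Or.inl ⟨h, hω⟩
      · exact Or.inr ⟨h, hω⟩
    · rintro (⟨-, hω⟩ | ⟨-, hω⟩) <;> exact hω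
  have hdisjB : Disjoint {ω | Z2 ω = 0 ∧ X ω = x} {ω | Z2 ω = 1 ∧ X ω = x} := by
    rw [Set.disjoint_left]
    rintro ω ⟨h0, -⟩ ⟨h1, -⟩
    rw [h0] at h1
    norm_num at h1
  obtain ⟨hIntF0', heq0⟩ := claim 0 (Or.inl rfl)
  obtain ⟨hIntF1', heq1⟩ := claim 1 (Or.inr rfl)
  have hNF : ∫ ω in {ω | X ω = x}, F ω ∂μ
      = (∫ ω in {ω | Z2 ω = 0 ∧ X ω = x}, F ω ∂μ)
        + ∫ ω in {ω | Z2 ω = 1 ∧ X ω = x}, F ω ∂μ := by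
    rw [hSxsplit]; exact setIntegral_union hdisjB hB1Ω hIntF0' hIntF1'
  have hMSsum : (μ {ω | X ω = x}).toReal
      = (μ {ω | Z2 ω = 0 ∧ X ω = x}).toReal + (μ {ω | Z2 ω = 1 ∧ X ω = x}).toReal := by
    rw [hSxsplit, measure_union hdisjB hB1Ω,
      ENNReal.toReal_add (measure_ne_top μ _) (measure_ne_top μ _)]
  have hMSne : (μ {ω | X ω = x}).toReal ≠ 0 :=
    (ENNReal.toReal_pos hx.ne' (measure_ne_top μ _)).ne'
  have hTau : ∫ ω in {ω | X ω = x}, (Y1 ω - Y0 ω) ∂μ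
      = (c1 - c0) * (μ {ω | X ω = x}).toReal := by
    rw [integral_sub hY1int.integrableOn hY0int.integrableOn, hSxint1, hSxint0]
    ring
  -- final assembly
  show condMeanOn μ {ω | X ω = x} F = _
  set H10 := condMeanOn μ {ω | Z1 ω = 1 ∧ Z2 ω = 0 ∧ X ω = x} (fun ω => m1 ω - r1 ω) with hH10
  set H00 := condMeanOn μ {ω | Z1 ω = 0 ∧ Z2 ω = 0 ∧ X ω = x} (fun ω => m0 ω - r0 ω) with hH00
  set H11 := condMeanOn μ {ω | Z1 ω = 1 ∧ Z2 ω = 1 ∧ X ω = x} (fun ω => m1 ω - r1 ω) with hH11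
  set H01 := condMeanOn μ {ω | Z1 ω = 0 ∧ Z2 ω = 1 ∧ X ω = x} (fun ω => m0 ω - r0 ω) with hH01
  simp only [condMeanOn]
  rw [hNF, heq0, heq1, hTau]
  field_simp
  rw [hMSsum]
  ring
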